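/- Let $F_1, \ldots, F_d$ be the $2^{d-1} \times 2^{d-1}$ anti-commuting self-adjoint unitary matrices defined recursively by $F_1^{[1]}=1$, $F_j^{[d]} = \sigma_x \otimes F_j^{[d-1]}$ for $j < d$, and $F_d^{[d]} = \sigma_z \otimes I$. Then the self-adjoint matrix $\sum_{j=1}^d F_j \otimes F_j$ has $d$ as an eigenvalue; in particular $\|\sum_{j=1}^d F_j \otimes F_j\| = d$. -/

import Mathlib

open Matrix Kronecker

noncomputable def pauliX : Matrix (Fin 2) (Fin 2) ℂ := !![0, 1; 1, 0]
noncomputable def pauliZ : Matrix (Fin 2) (Fin 2) ℂ := !![1, 0; 0, -1]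

/-- The recursively defined matrices `F j ^ [d]` of size `2 ^ (d-1)`:
`F 1 ^ [1] = 1`, `F j ^ [d] = σₓ ⊗ F j ^ [d-1]` for `j < d`, and `F d ^ [d] = σ_z ⊗ I`. -/
noncomputable def Fmat : (d : ℕ) → Fin d → Matrix (Fin (2 ^ (d - 1))) (Fin (2 ^ (d - 1))) ℂ
  | 0 => fun j => j.elim0
  | 1 => fun _ => 1
  | (d + 2) => fun j =>
    if h : (j : ℕ) < d + 1 then
      Matrix.reindex
        (finProdFinEquiv.trans (finCongr (by rw [show d + 1 - 1 = d from rfl,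
          show d + 2 - 1 = d + 1 from rfl, pow_succ]; ring)))
        (finProdFinEquiv.trans (finCongr (by rw [show d + 1 - 1 = d from rfl,
          show d + 2 - 1 = d + 1 from rfl, pow_succ]; ring)))
        (pauliX ⊗ₖ Fmat (d + 1) ⟨j, h⟩)
    else
      Matrix.reindex
        (finProdFinEquiv.trans (finCongr (by rw [show d + 2 - 1 = d + 1 from rfl, pow_succ]; ring)))
        (finProdFinEquiv.trans (finCongr (by rw [show d + 2 - 1 = d + 1 from rfl, pow_succ]; ring)))
        (pauliZ ⊗ₖ (1 : Matrix (Fin (2 ^ d)) (Fin (2 ^ d)) ℂ))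

lemma pauliX_mul_self : pauliX * pauliX = 1 := by
  rw [pauliX]; norm_num [Matrix.mul_fin_two]; exact Matrix.one_fin_two.symm

lemma pauliZ_mul_self : pauliZ * pauliZ = 1 := by
  rw [pauliZ]; norm_num [Matrix.mul_fin_two]; exact Matrix.one_fin_two.symm

lemma pauliX_conjTranspose : pauliXᴴ = pauliX := by
  rw [pauliX]; ext i j; fin_cases i <;> fin_cases j <;> simp

lemma pauliZ_conjTranspose : pauliZᴴ = pauliZ := by
  rw [pauliZ]; ext i j; fin_cases i <;> fin_cases j <;> simp

lemma kronecker_conjTranspose {l m n p : Type*} (A : Matrix l m ℂ) (B : Matrix n p ℂ) :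
    (A ⊗ₖ B)ᴴ = Aᴴ ⊗ₖ Bᴴ := by
  ext i j
  simp [conjTranspose_apply, kroneckerMap_apply, mul_comm]

lemma reindex_conjTranspose {m n : Type*} (e₁ : m ≃ n) (e₂ : m ≃ n) (A : Matrix m m ℂ) :
    (Matrix.reindex e₁ e₂ A)ᴴ = Matrix.reindex e₂ e₁ Aᴴ := rfl

lemma reindex_mul {m n : Type*} [Fintype m] [Fintype n] (e : m ≃ n) (A B : Matrix m m ℂ) :
    Matrix.reindex e e A * Matrix.reindex e e B = Matrix.reindex e e (A * B) := by
  simp only [Matrix.reindex_apply]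
  exact Matrix.submatrix_mul_equiv A B _ _ _

lemma Fmat_conjTranspose : ∀ d (j : Fin d), (Fmat d j)ᴴ = Fmat d j
  | 0, j => j.elim0
  | 1, j => by simp [Fmat]
  | (d + 2), j => by
    rw [Fmat]
    beta_reduce
    split_ifs with h
    · rw [reindex_conjTranspose, kronecker_conjTranspose, pauliX_conjTranspose,
        Fmat_conjTranspose (d + 1) ⟨j, h⟩]
    · rw [reindex_conjTranspose, kronecker_conjTranspose, pauliZ_conjTranspose,
        Matrix.conjTranspose_one]

lemma Fmat_mul_self : ∀ d (j : Fin d), Fmat d j * Fmat d j = 1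
  | 0, j => j.elim0
  | 1, j => by simp [Fmat]
  | (d + 2), j => by
    rw [Fmat]
    beta_reduce
    split_ifs with h
    · rw [reindex_mul, ← Matrix.mul_kronecker_mul, pauliX_mul_self,
        Fmat_mul_self (d + 1) ⟨j, h⟩, Matrix.one_kronecker_one, Matrix.reindex_apply,
        Matrix.submatrix_one_equiv]
    · rw [reindex_mul, ← Matrix.mul_kronecker_mul, pauliZ_mul_self, one_mul,
        Matrix.one_kronecker_one, Matrix.reindex_apply, Matrix.submatrix_one_equiv]

lemma Fmat_transpose : ∀ d (j : Fin d), (Fmat d j)ᵀ = Fmat d j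
  | 0, j => j.elim0
  | 1, j => by simp [Fmat]
  | (d + 2), j => by
    rw [Fmat]
    beta_reduce
    split_ifs with h
    · rw [Matrix.transpose_reindex, ← Matrix.kroneckerMap_transpose,
        Fmat_transpose (d + 1) ⟨j, h⟩, show pauliXᵀ = pauliX by
          rw [pauliX]; ext i k; fin_cases i <;> fin_cases k <;> simp]
    · rw [Matrix.transpose_reindex, ← Matrix.kroneckerMap_transpose, Matrix.transpose_one,
        show pauliZᵀ = pauliZ by
          rw [pauliZ]; ext i k; fin_cases i <;> fin_cases k <;> simp]

/-- The "maximally entangled" vector is fixed by `A ⊗ₖ A` when `A * Aᵀ = 1`. -/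
lemma kron_mulVec_diag {N : ℕ} (A B : Matrix (Fin N) (Fin N) ℂ) :
    (A ⊗ₖ B) *ᵥ (fun p : Fin N × Fin N => if p.1 = p.2 then 1 else 0) =
      fun p => (A * Bᵀ) p.1 p.2 := by
  funext p
  simp only [Matrix.mulVec, dotProduct, Fintype.sum_prod_type,
    Matrix.kroneckerMap_apply, Matrix.mul_apply, Matrix.transpose_apply]
  refine Finset.sum_congr rfl fun j _ => ?_
  rw [Finset.sum_eq_single j]
  · simp
  · intro l _ hl; simp [hl.symm]
  · intro hj; exact absurd (Finset.mem_univ j) hj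

theorem Fmat_kron_sum_hasEigenvalue_card (d : ℕ) (hd : 1 ≤ d) :
    Module.End.HasEigenvalue
      (Matrix.toLin' (∑ j : Fin d, Fmat d j ⊗ₖ Fmat d j)) (d : ℂ) ∧
    ‖Matrix.toEuclideanCLM (𝕜 := ℂ) (∑ j : Fin d, Fmat d j ⊗ₖ Fmat d j)‖ = d := by
  set N := 2 ^ (d - 1) with hN
  set v : Fin N × Fin N → ℂ := fun p => if p.1 = p.2 then 1 else 0 with hv
  have hNpos : 0 < N := pow_pos (by norm_num) _
  have hvne : v ≠ 0 := by
    intro h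
    have := congrFun h (⟨0, hNpos⟩, ⟨0, hNpos⟩)
    simp [hv] at this
  have hfix : ∀ j : Fin d, (Fmat d j ⊗ₖ Fmat d j) *ᵥ v = v := by
    intro j
    rw [hv, kron_mulVec_diag, Fmat_transpose, Fmat_mul_self]
    funext p
    simp [Matrix.one_apply]
  have heig : Matrix.toLin' (∑ j : Fin d, Fmat d j ⊗ₖ Fmat d j) v = (d : ℂ) • v := by
    rw [map_sum, LinearMap.sum_apply]
    simp only [Matrix.toLin'_apply, hfix]
    rw [Finset.sum_const, Finset.card_univ, Fintype.card_fin]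
    ext p
    simp
  have hsum : (∑ j : Fin d, Fmat d j ⊗ₖ Fmat d j) *ᵥ v = (d : ℂ) • v := by
    rw [← Matrix.toLin'_apply, heig]
  constructor
  · exact Module.End.hasEigenvalue_of_hasEigenvector
      ⟨Module.End.mem_eigenspace_iff.mpr heig, hvne⟩
  · set T := Matrix.toEuclideanCLM (𝕜 := ℂ) (n := Fin N × Fin N)
    have hunit : ∀ j : Fin d, ‖T (Fmat d j ⊗ₖ Fmat d j)‖ = 1 := by
      intro j
      have hH : (Fmat d j ⊗ₖ Fmat d j)ᴴ = Fmat d j ⊗ₖ Fmat d j := by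
        rw [kronecker_conjTranspose, Fmat_conjTranspose]
      have hM : (Fmat d j ⊗ₖ Fmat d j) * (Fmat d j ⊗ₖ Fmat d j) = 1 := by
        rw [← Matrix.mul_kronecker_mul, Fmat_mul_self, Matrix.one_kronecker_one]
      refine CStarRing.norm_of_mem_unitary ?_
      constructor
      · rw [← map_star, ← _root_.map_mul, Matrix.star_eq_conjTranspose, hH, hM, _root_.map_one]
      · rw [← map_star, ← _root_.map_mul, Matrix.star_eq_conjTranspose, hH, hM, _root_.map_one]
    have hle : ‖T (∑ j : Fin d, Fmat d j ⊗ₖ Fmat d j)‖ ≤ d := by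
      rw [map_sum]
      calc ‖∑ j : Fin d, T (Fmat d j ⊗ₖ Fmat d j)‖
          ≤ ∑ j : Fin d, ‖T (Fmat d j ⊗ₖ Fmat d j)‖ := norm_sum_le _ _
        _ = d := by simp [hunit]
    have hge : (d : ℝ) ≤ ‖T (∑ j : Fin d, Fmat d j ⊗ₖ Fmat d j)‖ := by
      set w : EuclideanSpace ℂ (Fin N × Fin N) := (WithLp.equiv 2 _).symm v with hw
      have hwne : w ≠ 0 := by
        intro h
        exact hvne ((WithLp.equiv 2 _).symm.injective (by simpa [hw] using h))
      have hTw : T (∑ j : Fin d, Fmat d j ⊗ₖ Fmat d j) w = (d : ℂ) • w := by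
        rw [hw, WithLp.equiv_symm_apply, Matrix.toEuclideanCLM_toLp, hsum,
          WithLp.toLp_smul]
      have := (T (∑ j : Fin d, Fmat d j ⊗ₖ Fmat d j)).le_opNorm w
      rw [hTw, norm_smul] at this
      have hwpos : 0 < ‖w‖ := norm_pos_iff.mpr hwne
      have : ‖(d : ℂ)‖ * ‖w‖ ≤ ‖T (∑ j : Fin d, Fmat d j ⊗ₖ Fmat d j)‖ * ‖w‖ := this
      have h2 := le_of_mul_le_mul_right this hwpos
      simpa using h2
    exact le_antisymm hle hge
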